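/- Let V be a finite-dimensional real inner product space, S(x) = R²‖x‖² with R > 0, and O₁,…,O_k linear functionals on V. The normalized Gaussian expectation (1/Z)∫_V O₁(x)⋯O_k(x) e^{−S(x)} dx vanishes if k is odd, and if k is even it equals the sum over all perfect matchings (pairings) of {1,…,k} of the product over matched pairs {i,j} of (1/(2R²))⟨O_i, O_j⟩. -/

import Mathlib

open MeasureTheory Real
open scoped RealInnerProductSpace Classical

namespace WickAux



variable {k : ℕ}

/-- Sum over perfect matchings of `s` of the product of edge weights. -/
noncomputable def Wsum (w : Sym2 (Fin k) → ℝ) (s : Finset (Fin k)) : ℝ :=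
  ∑ M : Finset (Sym2 (Fin k)),
    if (∀ e ∈ M, ¬ e.IsDiag) ∧ (∀ i ∈ s, ∃! e, e ∈ M ∧ i ∈ e) ∧ (∀ e ∈ M, ∀ i ∈ e, i ∈ s)
    then ∏ e ∈ M, w e else 0

lemma Wsum_empty (w : Sym2 (Fin k) → ℝ) : Wsum w (∅ : Finset (Fin k)) = 1 := by
  unfold Wsum
  have h : ∀ M : Finset (Sym2 (Fin k)),
      ((∀ e ∈ M, ¬ e.IsDiag) ∧ (∀ i ∈ (∅ : Finset (Fin k)), ∃! e, e ∈ M ∧ i ∈ e) ∧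
        (∀ e ∈ M, ∀ i ∈ e, i ∈ (∅ : Finset (Fin k)))) ↔ M = ∅ := by
    intro M
    constructor
    · rintro ⟨-, -, hsupp⟩
      rw [Finset.eq_empty_iff_forall_notMem]
      intro e he
      induction e using Sym2.ind with
      | _ a b => exact absurd (hsupp _ he a (Sym2.mem_mk_left a b)) (by simp)
    · rintro rfl
      refine ⟨by simp, by simp, by simp⟩
  calc (∑ M : Finset (Sym2 (Fin k)),
      if (∀ e ∈ M, ¬ e.IsDiag) ∧ (∀ i ∈ (∅ : Finset (Fin k)), ∃! e, e ∈ M ∧ i ∈ e) ∧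
        (∀ e ∈ M, ∀ i ∈ e, i ∈ (∅ : Finset (Fin k))) then ∏ e ∈ M, w e else 0)
      = ∑ M : Finset (Sym2 (Fin k)), if M = ∅ then ∏ e ∈ M, w e else 0 := by
        refine Finset.sum_congr rfl fun M _ => ?_
        exact if_congr (h M) rfl rfl
    _ = 1 := by
        rw [Finset.sum_ite_eq' Finset.univ (∅ : Finset (Sym2 (Fin k))) (fun M => ∏ e ∈ M, w e)]
        simp





variable {k : ℕ}

def IsPM (s : Finset (Fin k)) (M : Finset (Sym2 (Fin k))) : Prop :=
  (∀ e ∈ M, ¬ e.IsDiag) ∧ (∀ i ∈ s, ∃! e, e ∈ M ∧ i ∈ e) ∧ (∀ e ∈ M, ∀ i ∈ e, i ∈ s)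

lemma Wsum_eq_filter (w : Sym2 (Fin k) → ℝ) (s : Finset (Fin k)) :
    Wsum w s = ∑ M ∈ Finset.univ.filter (IsPM s), ∏ e ∈ M, w e := by
  rw [Finset.sum_filter, Wsum]
  refine Finset.sum_congr rfl fun M _ => ?_
  by_cases h : IsPM s M
  · rw [if_pos h]; exact if_pos h
  · rw [if_neg h]; exact if_neg h

lemma Wsum_rec (w : Sym2 (Fin k) → ℝ) {s : Finset (Fin k)} {a : Fin k} (ha : a ∈ s) :
    Wsum w s = ∑ j ∈ s.erase a, w s(a, j) * Wsum w ((s.erase a).erase j) := by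
  classical
  simp_rw [Wsum_eq_filter, Finset.mul_sum]
  rw [Finset.sum_sigma' (s.erase a)
    (fun j => Finset.univ.filter (IsPM ((s.erase a).erase j)))
    (fun j M' => w s(a, j) * ∏ e ∈ M', w e)]
  symm
  refine Finset.sum_bij (fun p _ => insert s(a, p.1) p.2) ?_ ?_ ?_ ?_
  · -- maps into target
    rintro ⟨j, M'⟩ hp
    rw [Finset.mem_sigma] at hp
    obtain ⟨hj, hM'⟩ := hp
    rw [Finset.mem_filter] at hM'
    have hnd := hM'.2.1
    have hcov := hM'.2.2.1
    have hsupp := hM'.2.2.2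
    obtain ⟨hja, hjs⟩ := Finset.mem_erase.mp hj
    dsimp only
    rw [Finset.mem_filter]
    refine ⟨Finset.mem_univ _, ?_, ?_, ?_⟩
    · intro e he
      rcases Finset.mem_insert.mp he with rfl | he'
      · simpa [Sym2.mk_isDiag_iff] using (Ne.symm hja)
      · exact hnd e he'
    · intro i his
      by_cases hia : i = a ∨ i = j
      · refine ⟨s(a, j), ⟨Finset.mem_insert_self _ _, by
          rcases hia with rfl | rfl <;> simp [Sym2.mem_iff]⟩, ?_⟩
        rintro e' ⟨he', hie'⟩
        rcases Finset.mem_insert.mp he' with rfl | he''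
        · rfl
        · exfalso
          have := hsupp e' he'' i hie'
          rw [Finset.mem_erase, Finset.mem_erase] at this
          rcases hia with rfl | rfl
          · exact this.2.1 rfl
          · exact this.1 rfl
      · push_neg at hia
        have hit : i ∈ (s.erase a).erase j :=
          Finset.mem_erase.mpr ⟨hia.2, Finset.mem_erase.mpr ⟨hia.1, his⟩⟩
        obtain ⟨e, ⟨heM, hie⟩, hu⟩ := hcov i hit
        refine ⟨e, ⟨Finset.mem_insert_of_mem heM, hie⟩, ?_⟩
        rintro e' ⟨he', hie'⟩
        rcases Finset.mem_insert.mp he' with rfl | he''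
        · exfalso
          rcases Sym2.mem_iff.mp hie' with rfl | rfl
          · exact hia.1 rfl
          · exact hia.2 rfl
        · exact hu e' ⟨he'', hie'⟩
    · intro e he i hie
      rcases Finset.mem_insert.mp he with rfl | he'
      · rcases Sym2.mem_iff.mp hie with rfl | rfl
        · exact ha
        · exact hjs
      · have := hsupp e he' i hie
        exact Finset.mem_of_mem_erase (Finset.mem_of_mem_erase this)
  · -- injectivity
    rintro ⟨j₁, M₁⟩ hp₁ ⟨j₂, M₂⟩ hp₂ heq
    rw [Finset.mem_sigma] at hp₁ hp₂
    obtain ⟨hj₁, hM₁⟩ := hp₁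
    obtain ⟨hj₂, hM₂⟩ := hp₂
    rw [Finset.mem_filter] at hM₁ hM₂
    dsimp only at hj₁ hM₁ hj₂ hM₂ heq ⊢
    replace hM₁ := hM₁.2
    replace hM₂ := hM₂.2
    have hnm₁ : s(a, j₁) ∉ M₁ := by
      intro h
      have := hM₁.2.2 _ h a (Sym2.mem_mk_left _ _)
      exact Finset.notMem_erase a s (Finset.mem_of_mem_erase this)
    have hnm₂ : s(a, j₂) ∉ M₂ := by
      intro h
      have := hM₂.2.2 _ h a (Sym2.mem_mk_left _ _)
      exact Finset.notMem_erase a s (Finset.mem_of_mem_erase this)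
    have hkey : s(a, j₂) = s(a, j₁) := by
      have h2 : s(a, j₂) ∈ insert s(a, j₁) M₁ := by
        rw [heq]; exact Finset.mem_insert_self _ _
      rcases Finset.mem_insert.mp h2 with h | h
      · exact h
      · exfalso
        have := hM₁.2.2 _ h a (Sym2.mem_mk_left _ _)
        exact Finset.notMem_erase a s (Finset.mem_of_mem_erase this)
    have hj : j₂ = j₁ := Sym2.congr_right.mp hkey
    cases hj
    have hM : M₁ = M₂ := by
      rw [← Finset.erase_insert hnm₁, ← Finset.erase_insert hnm₂, heq]
    cases hM
    rfl
  · -- surjectivity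
    intro M hM
    rw [Finset.mem_filter] at hM
    have hnd := hM.2.1
    have hcov := hM.2.2.1
    have hsupp := hM.2.2.2
    obtain ⟨e, ⟨heM, hae⟩, hu⟩ := hcov a ha
    obtain ⟨j, hspec⟩ : ∃ j, s(a, j) = e := ⟨Sym2.Mem.other hae, Sym2.other_spec hae⟩
    have haj : a ≠ j := by
      rintro rfl
      exact hnd e heM (by rw [← hspec]; simp [Sym2.mk_isDiag_iff])
    have hje : j ∈ e := by rw [← hspec]; exact Sym2.mem_mk_right _ _
    have hjs : j ∈ s := hsupp e heM j hje
    have hj : j ∈ s.erase a := Finset.mem_erase.mpr ⟨Ne.symm haj, hjs⟩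
    have huj : ∀ e' ∈ M, j ∈ e' → e' = e := by
      obtain ⟨ej, hej, huj'⟩ := hcov j hjs
      intro e' he' hje'
      rw [huj' e' ⟨he', hje'⟩, ← huj' e ⟨heM, hje⟩]
    have hP' : IsPM ((s.erase a).erase j) (M.erase e) := by
      refine ⟨fun e' he' => hnd e' (Finset.mem_of_mem_erase he'), ?_, ?_⟩
      · intro i hit
        rw [Finset.mem_erase, Finset.mem_erase] at hit
        have hij := hit.1
        have hia := hit.2.1
        have his := hit.2.2
        obtain ⟨e', ⟨he'M, hie'⟩, hu'⟩ := hcov i his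
        have he'e : e' ≠ e := by
          rintro rfl
          rw [← hspec] at hie'
          rcases Sym2.mem_iff.mp hie' with rfl | rfl
          · exact hia rfl
          · exact hij rfl
        refine ⟨e', ⟨Finset.mem_erase.mpr ⟨he'e, he'M⟩, hie'⟩, ?_⟩
        rintro e'' ⟨he'', hie''⟩
        exact hu' e'' ⟨Finset.mem_of_mem_erase he'', hie''⟩
      · intro e' he' i hie'
        have he'M : e' ∈ M := Finset.mem_of_mem_erase he'
        have he'e : e' ≠ e := Finset.ne_of_mem_erase he'
        have his : i ∈ s := hsupp e' he'M i hie'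
        have hia : i ≠ a := by
          rintro rfl
          exact he'e (hu e' ⟨he'M, hie'⟩)
        have hij : i ≠ j := by
          rintro rfl
          exact he'e (huj e' he'M hie')
        exact Finset.mem_erase.mpr ⟨hij, Finset.mem_erase.mpr ⟨hia, his⟩⟩
    refine ⟨⟨j, M.erase e⟩, ?_, ?_⟩
    · rw [Finset.mem_sigma]
      exact ⟨hj, Finset.mem_filter.mpr ⟨Finset.mem_univ _, hP'⟩⟩
    · show insert s(a, j) (M.erase e) = M
      rw [hspec]
      exact Finset.insert_erase heM
  · -- values agree
    rintro ⟨j, M'⟩ hp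
    rw [Finset.mem_sigma] at hp
    obtain ⟨hj, hM'⟩ := hp
    rw [Finset.mem_filter] at hM'
    have hnm : s(a, j) ∉ M' := by
      intro h
      have := hM'.2.2.2 _ h a (Sym2.mem_mk_left _ _)
      exact Finset.notMem_erase a s (Finset.mem_of_mem_erase this)
    show w s(a, j) * ∏ e ∈ M', w e = ∏ e ∈ insert s(a, j) M', w e
    rw [Finset.prod_insert hnm]




variable {n : ℕ}

lemma integrable_exp_gauss {b : ℝ} (hb : 0 < b) (c : ℝ) :
    Integrable (fun x : EuclideanSpace ℝ (Fin n) => Real.exp (c * ‖x‖ - b * ‖x‖ ^ 2)) := by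
  have h0 : Integrable (fun x : EuclideanSpace ℝ (Fin n) => Real.exp (-(b / 2) * ‖x‖ ^ 2)) := by
    have h := (GaussianFourier.integrable_cexp_neg_mul_sq_norm_add
      (V := EuclideanSpace ℝ (Fin n)) (b := ((b / 2 : ℝ) : ℂ)) (by simpa using half_pos hb) 0
      (0 : EuclideanSpace ℝ (Fin n))).norm
    convert h using 2 with x
    rw [Complex.norm_exp]
    congr 1
    simp [← Complex.ofReal_pow, ← Complex.ofReal_mul, ← Complex.ofReal_neg]
  refine (h0.const_mul (Real.exp (c ^ 2 / (2 * b)))).mono'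
    ((Real.continuous_exp.comp (by continuity)).aestronglyMeasurable)
    (Filter.Eventually.of_forall fun x => ?_)
  rw [Real.norm_eq_abs, Real.abs_exp, ← Real.exp_add]
  apply Real.exp_le_exp.mpr
  have hle : c * ‖x‖ * (2 * b) ≤ c ^ 2 + b ^ 2 * ‖x‖ ^ 2 := by
    nlinarith [sq_nonneg (c - b * ‖x‖)]
  have h2 : c * ‖x‖ ≤ (c ^ 2 + b ^ 2 * ‖x‖ ^ 2) / (2 * b) :=
    (le_div_iff₀ (by positivity)).mpr hle
  have h3 : (c ^ 2 + b ^ 2 * ‖x‖ ^ 2) / (2 * b) = c ^ 2 / (2 * b) + (b / 2) * ‖x‖ ^ 2 := by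
    field_simp
  linarith

lemma integrable_mul_gauss {b : ℝ} (hb : 0 < b) (c C : ℝ)
    (G : EuclideanSpace ℝ (Fin n) → ℝ) (hG : Continuous G)
    (hbd : ∀ x, |G x| ≤ C * Real.exp (c * ‖x‖)) :
    Integrable (fun x : EuclideanSpace ℝ (Fin n) => G x * Real.exp (-(b * ‖x‖ ^ 2))) := by
  refine ((integrable_exp_gauss hb c).const_mul C).mono'
    ((hG.mul (Real.continuous_exp.comp (by continuity))).aestronglyMeasurable)
    (Filter.Eventually.of_forall fun x => ?_)
  rw [norm_mul, Real.norm_eq_abs, Real.norm_eq_abs, Real.abs_exp]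
  calc |G x| * Real.exp (-(b * ‖x‖ ^ 2))
      ≤ (C * Real.exp (c * ‖x‖)) * Real.exp (-(b * ‖x‖ ^ 2)) :=
        mul_le_mul_of_nonneg_right (hbd x) (Real.exp_pos _).le
    _ = C * Real.exp (c * ‖x‖ - b * ‖x‖ ^ 2) := by
        rw [mul_assoc, ← Real.exp_add]; ring_nf

lemma prod_inner_bound {k : ℕ} (O : Fin k → EuclideanSpace ℝ (Fin n)) (s : Finset (Fin k))
    (x : EuclideanSpace ℝ (Fin n)) :
    |∏ i ∈ s, ⟪O i, x⟫| ≤ (∏ i ∈ s, (1 + ‖O i‖)) * Real.exp ((s.card : ℝ) * ‖x‖) := by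
  rw [Finset.abs_prod]
  have hxe : ‖x‖ ≤ Real.exp ‖x‖ := by nlinarith [Real.add_one_le_exp ‖x‖]
  calc ∏ i ∈ s, |⟪O i, x⟫| ≤ ∏ i ∈ s, ((1 + ‖O i‖) * Real.exp ‖x‖) := by
        refine Finset.prod_le_prod (fun i _ => abs_nonneg _) fun i _ => ?_
        calc |⟪O i, x⟫| ≤ ‖O i‖ * ‖x‖ := abs_real_inner_le_norm _ _
          _ ≤ (1 + ‖O i‖) * Real.exp ‖x‖ := by
              have h1 := norm_nonneg (O i)
              have h2 := norm_nonneg x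
              nlinarith [Real.exp_pos ‖x‖]
    _ = (∏ i ∈ s, (1 + ‖O i‖)) * Real.exp ‖x‖ ^ s.card := by
        rw [Finset.prod_mul_distrib, Finset.prod_const]
    _ = (∏ i ∈ s, (1 + ‖O i‖)) * Real.exp ((s.card : ℝ) * ‖x‖) := by
        rw [← Real.exp_nat_mul]


set_option maxHeartbeats 1000000 in
lemma ibp {k : ℕ} (O : Fin k → EuclideanSpace ℝ (Fin n)) {R : ℝ} (hR : 0 < R)
    (s : Finset (Fin k)) (v : EuclideanSpace ℝ (Fin n)) :
    ∫ x : EuclideanSpace ℝ (Fin n),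
      ((∑ j ∈ s, ⟪O j, v⟫ * ∏ i ∈ s.erase j, ⟪O i, x⟫)
        - 2 * R ^ 2 * ⟪v, x⟫ * ∏ i ∈ s, ⟪O i, x⟫) * Real.exp (-(R ^ 2 * ‖x‖ ^ 2)) = 0 := by
  classical
  set m := s.card with hm
  set F : ℝ → EuclideanSpace ℝ (Fin n) → ℝ := fun ε x =>
    (∏ i ∈ s, (⟪O i, x⟫ + ε * ⟪O i, v⟫)) *
      Real.exp (-(R ^ 2 * (‖x‖ ^ 2 + ε * (2 * ⟪v, x⟫) + ε ^ 2 * ‖v‖ ^ 2))) with hF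
  set F' : ℝ → EuclideanSpace ℝ (Fin n) → ℝ := fun ε x =>
    ((∑ j ∈ s, ⟪O j, v⟫ * ∏ i ∈ s.erase j, (⟪O i, x⟫ + ε * ⟪O i, v⟫))
      - R ^ 2 * (2 * ⟪v, x⟫ + 2 * ε * ‖v‖ ^ 2) * ∏ i ∈ s, (⟪O i, x⟫ + ε * ⟪O i, v⟫)) *
      Real.exp (-(R ^ 2 * (‖x‖ ^ 2 + ε * (2 * ⟪v, x⟫) + ε ^ 2 * ‖v‖ ^ 2))) with hF'
  -- F ε x is the Gaussian integrand translated by ε • v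
  have key : ∀ (ε : ℝ) (x : EuclideanSpace ℝ (Fin n)), F ε x
      = (∏ i ∈ s, ⟪O i, x + ε • v⟫) * Real.exp (-(R ^ 2 * ‖x + ε • v‖ ^ 2)) := by
    intro ε x
    have h1 : ∀ i, ⟪O i, x + ε • v⟫ = ⟪O i, x⟫ + ε * ⟪O i, v⟫ := fun i => by
      rw [inner_add_right, real_inner_smul_right]
    have h2 : ‖x + ε • v‖ ^ 2 = ‖x‖ ^ 2 + ε * (2 * ⟪v, x⟫) + ε ^ 2 * ‖v‖ ^ 2 := by
      rw [norm_add_sq_real, real_inner_smul_right, norm_smul, mul_pow, real_inner_comm x v,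
        Real.norm_eq_abs, sq_abs]
      ring
    simp only [hF, h1, h2]
  -- the integral of F ε is independent of ε
  have hFconst : ∀ ε : ℝ, (∫ x, F ε x) = ∫ x, F 0 x := by
    intro ε
    have h1 : (∫ x, F ε x) = ∫ x : EuclideanSpace ℝ (Fin n),
        (∏ i ∈ s, ⟪O i, x + ε • v⟫) * Real.exp (-(R ^ 2 * ‖x + ε • v‖ ^ 2)) := by
      simp_rw [key]
    have h2 := MeasureTheory.integral_add_right_eq_self (μ := volume)
      (fun y : EuclideanSpace ℝ (Fin n) => (∏ i ∈ s, ⟪O i, y⟫) *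
        Real.exp (-(R ^ 2 * ‖y‖ ^ 2))) (ε • v)
    rw [h1, h2]
    refine (congrArg _ (funext fun x => ?_)).symm
    rw [key 0 x]
    simp
  have hcont_inner : ∀ w : EuclideanSpace ℝ (Fin n),
      Continuous fun x : EuclideanSpace ℝ (Fin n) => (⟪w, x⟫ : ℝ) :=
    fun w => continuous_const.inner continuous_id
  have hFint0 : Integrable (F 0) := by
    have h : F 0 = fun x => (∏ i ∈ s, ⟪O i, x⟫) * Real.exp (-(R ^ 2 * ‖x‖ ^ 2)) := by
      funext x; simp [hF]
    rw [h]
    exact integrable_mul_gauss (by positivity) (s.card : ℝ) (∏ i ∈ s, (1 + ‖O i‖)) _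
      (continuous_finset_prod s fun i _ => hcont_inner (O i)) (prod_inner_bound O s)
  have hquad : ∀ ε : ℝ, Continuous fun x : EuclideanSpace ℝ (Fin n) =>
      -(R ^ 2 * (‖x‖ ^ 2 + ε * (2 * ⟪v, x⟫) + ε ^ 2 * ‖v‖ ^ 2)) := by
    intro ε
    exact (continuous_const.mul (((continuous_norm.pow 2).add
      (continuous_const.mul (continuous_const.mul (hcont_inner v)))).add
      continuous_const)).neg
  have hFmeas : ∀ ε : ℝ, AEStronglyMeasurable (F ε) volume := by
    intro ε
    apply Continuous.aestronglyMeasurable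
    apply Continuous.mul
    · exact continuous_finset_prod s fun i _ =>
        ((hcont_inner (O i)).add (continuous_const))
    · exact Real.continuous_exp.comp (hquad ε)
  have hF'meas : AEStronglyMeasurable (F' 0) volume := by
    apply Continuous.aestronglyMeasurable
    apply Continuous.mul
    · apply Continuous.sub
      · exact continuous_finset_sum s fun j _ => continuous_const.mul
          (continuous_finset_prod _ fun i _ => ((hcont_inner (O i)).add continuous_const))
      · exact (continuous_const.mul ((continuous_const.mul (hcont_inner v)).add
          continuous_const)).mul
          (continuous_finset_prod s fun i _ => ((hcont_inner (O i)).add continuous_const))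
    · exact Real.continuous_exp.comp (hquad 0)
  -- the derivative in ε
  have hdiff : ∀ (x : EuclideanSpace ℝ (Fin n)) (ε : ℝ),
      HasDerivAt (fun e => F e x) (F' ε x) ε := by
    intro x ε
    have h1 : HasDerivAt (fun e : ℝ => ∏ i ∈ s, (⟪O i, x⟫ + e * ⟪O i, v⟫))
        (∑ j ∈ s, (∏ i ∈ s.erase j, (⟪O i, x⟫ + ε * ⟪O i, v⟫)) * ⟪O j, v⟫) ε := by
      have h := HasDerivAt.finset_prod (u := s)
        (f := fun i e => ⟪O i, x⟫ + e * ⟪O i, v⟫) (f' := fun i => ⟪O i, v⟫) (x := ε)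
        (fun i _ => by
          have : HasDerivAt (fun e : ℝ => ⟪O i, x⟫ + e * ⟪O i, v⟫) ⟪O i, v⟫ ε :=
            (hasDerivAt_mul_const _).const_add _
          exact this)
      simpa [smul_eq_mul, Finset.prod_fn] using h
    have ha : HasDerivAt (fun e : ℝ => ‖x‖ ^ 2 + e * (2 * ⟪v, x⟫) + e ^ 2 * ‖v‖ ^ 2)
        (2 * ⟪v, x⟫ + 2 * ε * ‖v‖ ^ 2) ε := by
      have hb := (hasDerivAt_pow 2 ε).mul_const (‖v‖ ^ 2)
      have hc : HasDerivAt (fun e : ℝ => ‖x‖ ^ 2 + e * (2 * ⟪v, x⟫)) (2 * ⟪v, x⟫) ε :=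
        (hasDerivAt_mul_const _).const_add _
      have h := hc.add hb
      refine h.congr_deriv ?_
      simp
      try ring
    have h2 : HasDerivAt
        (fun e : ℝ => Real.exp (-(R ^ 2 * (‖x‖ ^ 2 + e * (2 * ⟪v, x⟫) + e ^ 2 * ‖v‖ ^ 2))))
        (Real.exp (-(R ^ 2 * (‖x‖ ^ 2 + ε * (2 * ⟪v, x⟫) + ε ^ 2 * ‖v‖ ^ 2))) *
          (-(R ^ 2 * (2 * ⟪v, x⟫ + 2 * ε * ‖v‖ ^ 2)))) ε :=
      ((ha.const_mul (R ^ 2)).neg).exp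
    have h := h1.mul h2
    have hsum : (∑ j ∈ s, ⟪O j, v⟫ * ∏ i ∈ s.erase j, (⟪O i, x⟫ + ε * ⟪O i, v⟫))
        = ∑ j ∈ s, (∏ i ∈ s.erase j, (⟪O i, x⟫ + ε * ⟪O i, v⟫)) * ⟪O j, v⟫ :=
      Finset.sum_congr rfl fun j _ => mul_comm _ _
    refine h.congr_deriv ?_
    simp only [hF']
    rw [hsum]
    ring
  -- constants for the uniform bound
  set S : ℝ := 1 + ∑ i : Fin k, ‖O i‖ with hS
  set D : ℝ := (1 + ‖v‖) * S with hD
  set E : ℝ := 2 * R ^ 2 * (1 + ‖v‖) ^ 2 with hE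
  set c₀ : ℝ := ((m : ℝ) + 1) + 2 * R ^ 2 * ‖v‖ with hc₀
  set C₀ : ℝ := (m : ℝ) * D ^ (m + 1) + E * D ^ m with hC₀
  have hS1 : 1 ≤ S := by
    rw [hS]
    have : (0:ℝ) ≤ ∑ i : Fin k, ‖O i‖ := Finset.sum_nonneg fun i _ => norm_nonneg _
    linarith
  have hD1 : 1 ≤ D := by rw [hD]; nlinarith [norm_nonneg v]
  have hE0 : 0 ≤ E := by rw [hE]; positivity
  have hOS : ∀ i : Fin k, ‖O i‖ ≤ S := by
    intro i
    rw [hS]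
    have := Finset.single_le_sum (f := fun i : Fin k => ‖O i‖)
      (fun i _ => norm_nonneg _) (Finset.mem_univ i)
    linarith
  have hbound : ∀ x : EuclideanSpace ℝ (Fin n), ∀ ε ∈ Metric.ball (0:ℝ) 1,
      ‖F' ε x‖ ≤ C₀ * Real.exp (c₀ * ‖x‖ - R ^ 2 * ‖x‖ ^ 2) := by
    intro x ε hε
    have hε1 : |ε| ≤ 1 := by
      rw [Metric.mem_ball, Real.dist_eq, sub_zero] at hε; exact hε.le
    obtain ⟨hεl, hεu⟩ := abs_le.mp hε1
    have hxe : 1 + ‖x‖ ≤ Real.exp ‖x‖ := by linarith [Real.add_one_le_exp ‖x‖]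
    have hexp1 : (1:ℝ) ≤ Real.exp ‖x‖ := Real.one_le_exp (norm_nonneg x)
    have hfac : ∀ i : Fin k, |⟪O i, x⟫ + ε * ⟪O i, v⟫| ≤ D * Real.exp ‖x‖ := by
      intro i
      have h1 : |⟪O i, x⟫ + ε * ⟪O i, v⟫| ≤ ‖O i‖ * ‖x‖ + ‖O i‖ * ‖v‖ := by
        have ha := abs_real_inner_le_norm (O i) x
        have hb := abs_real_inner_le_norm (O i) v
        calc |⟪O i, x⟫ + ε * ⟪O i, v⟫| ≤ |⟪O i, x⟫| + |ε * ⟪O i, v⟫| := abs_add_le _ _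
          _ ≤ ‖O i‖ * ‖x‖ + ‖O i‖ * ‖v‖ := by
              rw [abs_mul]
              have h2 : |ε| * |⟪O i, v⟫| ≤ 1 * (‖O i‖ * ‖v‖) :=
                mul_le_mul hε1 hb (abs_nonneg _) zero_le_one
              linarith
      have h2 : ‖O i‖ * ‖x‖ + ‖O i‖ * ‖v‖ ≤ D * (1 + ‖x‖) := by
        rw [hD]
        have e1 : ‖O i‖ * ‖x‖ ≤ S * ‖x‖ := mul_le_mul_of_nonneg_right (hOS i) (norm_nonneg x)
        have e2 : ‖O i‖ * ‖v‖ ≤ S * ‖v‖ := mul_le_mul_of_nonneg_right (hOS i) (norm_nonneg v)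
        have e3 : (0:ℝ) ≤ S * ‖v‖ * ‖x‖ :=
          mul_nonneg (mul_nonneg (by linarith) (norm_nonneg v)) (norm_nonneg x)
        nlinarith [norm_nonneg x, norm_nonneg v, hS1]
      have h3 : D * (1 + ‖x‖) ≤ D * Real.exp ‖x‖ :=
        mul_le_mul_of_nonneg_left hxe (by linarith)
      linarith
    have hDe1 : (1:ℝ) ≤ D * Real.exp ‖x‖ := by nlinarith
    have hprodt : ∀ t : Finset (Fin k), t ⊆ s →
        |∏ i ∈ t, (⟪O i, x⟫ + ε * ⟪O i, v⟫)| ≤ (D * Real.exp ‖x‖) ^ m := by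
      intro t ht
      rw [Finset.abs_prod]
      calc ∏ i ∈ t, |⟪O i, x⟫ + ε * ⟪O i, v⟫| ≤ ∏ _i ∈ t, (D * Real.exp ‖x‖) :=
            Finset.prod_le_prod (fun i _ => abs_nonneg _) fun i _ => hfac i
        _ = (D * Real.exp ‖x‖) ^ t.card := Finset.prod_const _
        _ ≤ (D * Real.exp ‖x‖) ^ m := by
            apply pow_le_pow_right₀ hDe1
            rw [hm]
            exact Finset.card_le_card ht
    have hDv : ∀ j : Fin k, |⟪O j, v⟫| ≤ D := by
      intro j
      have h1 := abs_real_inner_le_norm (O j) v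
      rw [hD]
      nlinarith [norm_nonneg (O j), norm_nonneg v, hOS j, hS1,
        mul_le_mul_of_nonneg_right (hOS j) (norm_nonneg v)]
    have hsum1 : |∑ j ∈ s, ⟪O j, v⟫ * ∏ i ∈ s.erase j, (⟪O i, x⟫ + ε * ⟪O i, v⟫)|
        ≤ (m : ℝ) * (D * (D * Real.exp ‖x‖) ^ m) := by
      calc |∑ j ∈ s, ⟪O j, v⟫ * ∏ i ∈ s.erase j, (⟪O i, x⟫ + ε * ⟪O i, v⟫)|
          ≤ ∑ j ∈ s, |⟪O j, v⟫ * ∏ i ∈ s.erase j, (⟪O i, x⟫ + ε * ⟪O i, v⟫)| :=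
            Finset.abs_sum_le_sum_abs _ _
        _ ≤ ∑ _j ∈ s, D * (D * Real.exp ‖x‖) ^ m := by
            refine Finset.sum_le_sum fun j _ => ?_
            rw [abs_mul]
            exact mul_le_mul (hDv j) (hprodt _ (Finset.erase_subset _ _)) (abs_nonneg _)
              (by linarith)
        _ = (m : ℝ) * (D * (D * Real.exp ‖x‖) ^ m) := by
            rw [Finset.sum_const, ← hm, nsmul_eq_mul]
    have hterm2 : |R ^ 2 * (2 * ⟪v, x⟫ + 2 * ε * ‖v‖ ^ 2)| ≤ E * Real.exp ‖x‖ := by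
      obtain ⟨htl, htu⟩ := abs_le.mp (abs_real_inner_le_norm v x)
      have hA : ‖x‖ + ‖v‖ ≤ (1 + ‖v‖) * Real.exp ‖x‖ := by
        nlinarith [norm_nonneg v, norm_nonneg x]
      have hB : ‖v‖ * (‖x‖ + ‖v‖) ≤ (1 + ‖v‖) * ((1 + ‖v‖) * Real.exp ‖x‖) :=
        mul_le_mul (by linarith [norm_nonneg v]) hA (by positivity)
          (by positivity)
      have hlow : -((1 + ‖v‖) * ((1 + ‖v‖) * Real.exp ‖x‖)) ≤ ⟪v, x⟫ + ε * ‖v‖ ^ 2 := by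
        nlinarith [htl, hεl, sq_nonneg ‖v‖, hB]
      have hup : ⟪v, x⟫ + ε * ‖v‖ ^ 2 ≤ (1 + ‖v‖) * ((1 + ‖v‖) * Real.exp ‖x‖) := by
        nlinarith [htu, hεu, sq_nonneg ‖v‖, hB]
      rw [hE, abs_le]
      constructor
      · nlinarith [mul_le_mul_of_nonneg_left hlow (sq_nonneg R)]
      · nlinarith [mul_le_mul_of_nonneg_left hup (sq_nonneg R)]
    have hexparg : Real.exp (-(R ^ 2 * (‖x‖ ^ 2 + ε * (2 * ⟪v, x⟫) + ε ^ 2 * ‖v‖ ^ 2)))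
        ≤ Real.exp (2 * R ^ 2 * ‖v‖ * ‖x‖ - R ^ 2 * ‖x‖ ^ 2) := by
      apply Real.exp_le_exp.mpr
      obtain ⟨htl, htu⟩ := abs_le.mp (abs_real_inner_le_norm v x)
      have hP : (0:ℝ) ≤ ⟪v, x⟫ * ε + ‖v‖ * ‖x‖ := by nlinarith
      nlinarith [mul_nonneg (sq_nonneg R) hP,
        mul_nonneg (sq_nonneg R) (mul_nonneg (sq_nonneg ε) (sq_nonneg ‖v‖))]
    -- put everything together
    have hnorm : ‖F' ε x‖
        = |∑ j ∈ s, ⟪O j, v⟫ * ∏ i ∈ s.erase j, (⟪O i, x⟫ + ε * ⟪O i, v⟫)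
            - R ^ 2 * (2 * ⟪v, x⟫ + 2 * ε * ‖v‖ ^ 2) * ∏ i ∈ s, (⟪O i, x⟫ + ε * ⟪O i, v⟫)| *
          Real.exp (-(R ^ 2 * (‖x‖ ^ 2 + ε * (2 * ⟪v, x⟫) + ε ^ 2 * ‖v‖ ^ 2))) := by
      rw [hF', Real.norm_eq_abs, abs_mul, Real.abs_exp]
    rw [hnorm]
    have hpref : |∑ j ∈ s, ⟪O j, v⟫ * ∏ i ∈ s.erase j, (⟪O i, x⟫ + ε * ⟪O i, v⟫)
            - R ^ 2 * (2 * ⟪v, x⟫ + 2 * ε * ‖v‖ ^ 2) * ∏ i ∈ s, (⟪O i, x⟫ + ε * ⟪O i, v⟫)|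
        ≤ (m : ℝ) * (D * (D * Real.exp ‖x‖) ^ m)
          + (E * Real.exp ‖x‖) * (D * Real.exp ‖x‖) ^ m := by
      have h1 : |R ^ 2 * (2 * ⟪v, x⟫ + 2 * ε * ‖v‖ ^ 2) * ∏ i ∈ s, (⟪O i, x⟫ + ε * ⟪O i, v⟫)|
          ≤ (E * Real.exp ‖x‖) * (D * Real.exp ‖x‖) ^ m := by
        rw [abs_mul]
        exact mul_le_mul hterm2 (hprodt s le_rfl) (abs_nonneg _) (by positivity)
      exact (abs_sub _ _).trans (add_le_add hsum1 h1)
    calc _ ≤ ((m : ℝ) * (D * (D * Real.exp ‖x‖) ^ m)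
          + (E * Real.exp ‖x‖) * (D * Real.exp ‖x‖) ^ m) *
          Real.exp (2 * R ^ 2 * ‖v‖ * ‖x‖ - R ^ 2 * ‖x‖ ^ 2) :=
          mul_le_mul hpref hexparg (Real.exp_pos _).le (by positivity)
      _ ≤ C₀ * Real.exp (c₀ * ‖x‖ - R ^ 2 * ‖x‖ ^ 2) := by
          rw [hC₀, hc₀]
          have hpow : (D * Real.exp ‖x‖) ^ m = D ^ m * Real.exp ((m : ℝ) * ‖x‖) := by
            rw [mul_pow, ← Real.exp_nat_mul]
          have hsplit : Real.exp ((((m : ℝ) + 1) + 2 * R ^ 2 * ‖v‖) * ‖x‖ - R ^ 2 * ‖x‖ ^ 2)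
              = Real.exp ‖x‖ * Real.exp ((m : ℝ) * ‖x‖)
                * Real.exp (2 * R ^ 2 * ‖v‖ * ‖x‖ - R ^ 2 * ‖x‖ ^ 2) := by
            rw [← Real.exp_add, ← Real.exp_add]
            ring_nf
          rw [hpow, hsplit, pow_succ D m]
          have hem : (0:ℝ) < Real.exp ((m : ℝ) * ‖x‖) := Real.exp_pos _
          have he2 : (0:ℝ) < Real.exp (2 * R ^ 2 * ‖v‖ * ‖x‖ - R ^ 2 * ‖x‖ ^ 2) := Real.exp_pos _
          have hDm : (0:ℝ) ≤ D ^ m := by positivity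
          have hkey : (0:ℝ) ≤ (m : ℝ) * (D ^ m * D)
              * (Real.exp ((m : ℝ) * ‖x‖) * Real.exp (2 * R ^ 2 * ‖v‖ * ‖x‖ - R ^ 2 * ‖x‖ ^ 2))
              * (Real.exp ‖x‖ - 1) := by
            apply mul_nonneg
            · positivity
            · linarith
          nlinarith [hkey]
  -- apply differentiation under the integral sign
  have main := hasDerivAt_integral_of_dominated_loc_of_deriv_le (μ := volume)
      (F := F) (F' := F') (x₀ := (0:ℝ)) (s := Metric.ball (0:ℝ) 1)
      (bound := fun x => C₀ * Real.exp (c₀ * ‖x‖ - R ^ 2 * ‖x‖ ^ 2))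
      (Metric.ball_mem_nhds _ one_pos)
      (Filter.Eventually.of_forall fun ε => hFmeas ε)
      hFint0 hF'meas
      (Filter.Eventually.of_forall fun x ε hε => hbound x ε hε)
      ((integrable_exp_gauss (by positivity) c₀).const_mul C₀)
      (Filter.Eventually.of_forall fun x ε _ => hdiff x ε)
  have hder : HasDerivAt (fun ε => ∫ x, F ε x) (∫ x, F' 0 x) 0 := main.2
  have hconst : HasDerivAt (fun ε => ∫ x, F ε x) 0 0 := by
    have h : (fun ε : ℝ => ∫ x, F ε x) = fun _ => ∫ x, F 0 x := funext hFconst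
    rw [h]
    exact hasDerivAt_const _ _
  have hzero : (∫ x, F' 0 x) = 0 := hder.unique hconst
  rw [← hzero]
  refine congrArg _ (funext fun x => ?_)
  simp only [hF']
  norm_num
  exact Or.inl (by ring)



namespace Part2
open WickAux

variable {n k : ℕ} (O : Fin k → EuclideanSpace ℝ (Fin n))

lemma integrable_const_mul_prod {R : ℝ} (hR : 0 < R) (c : ℝ) (t : Finset (Fin k)) :
    Integrable (fun x : EuclideanSpace ℝ (Fin n) =>
      (c * ∏ i ∈ t, ⟪O i, x⟫) * Real.exp (-(R ^ 2 * ‖x‖ ^ 2))) := by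
  refine integrable_mul_gauss (by positivity) (t.card : ℝ) (|c| * ∏ i ∈ t, (1 + ‖O i‖)) _
    (continuous_const.mul (continuous_finset_prod t fun i _ =>
      continuous_const.inner continuous_id)) fun x => ?_
  rw [abs_mul, mul_assoc]
  exact mul_le_mul_of_nonneg_left (prod_inner_bound O t x) (abs_nonneg c)

lemma integrable_inner_mul_prod {R : ℝ} (hR : 0 < R) (v : EuclideanSpace ℝ (Fin n))
    (t : Finset (Fin k)) :
    Integrable (fun x : EuclideanSpace ℝ (Fin n) =>
      (⟪v, x⟫ * ∏ i ∈ t, ⟪O i, x⟫) * Real.exp (-(R ^ 2 * ‖x‖ ^ 2))) := by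
  refine integrable_mul_gauss (by positivity) ((t.card : ℝ) + 1)
    ((1 + ‖v‖) * ∏ i ∈ t, (1 + ‖O i‖)) _
    ((continuous_const.inner continuous_id).mul (continuous_finset_prod t fun i _ =>
      continuous_const.inner continuous_id)) fun x => ?_
  have hxe : ‖x‖ ≤ Real.exp ‖x‖ := by nlinarith [Real.add_one_le_exp ‖x‖]
  have h1 : |⟪v, x⟫| ≤ (1 + ‖v‖) * Real.exp ‖x‖ := by
    have := abs_real_inner_le_norm v x
    nlinarith [norm_nonneg v, norm_nonneg x, Real.exp_pos ‖x‖]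
  rw [abs_mul]
  calc |⟪v, x⟫| * |∏ i ∈ t, ⟪O i, x⟫|
      ≤ ((1 + ‖v‖) * Real.exp ‖x‖) * ((∏ i ∈ t, (1 + ‖O i‖)) * Real.exp ((t.card : ℝ) * ‖x‖)) :=
        mul_le_mul h1 (prod_inner_bound O t x) (abs_nonneg _) (by positivity)
    _ = (1 + ‖v‖) * (∏ i ∈ t, (1 + ‖O i‖)) * Real.exp (((t.card : ℝ) + 1) * ‖x‖) := by
        rw [show ((t.card : ℝ) + 1) * ‖x‖ = ‖x‖ + (t.card : ℝ) * ‖x‖ by ring, Real.exp_add]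
        ring

lemma J_rec {R : ℝ} (hR : 0 < R) {s : Finset (Fin k)} {a : Fin k} (ha : a ∈ s) :
    (∫ x : EuclideanSpace ℝ (Fin n), (∏ i ∈ s, ⟪O i, x⟫) * Real.exp (-(R ^ 2 * ‖x‖ ^ 2)))
      = ∑ j ∈ s.erase a, (1 / (2 * R ^ 2)) * ⟪O a, O j⟫ *
          ∫ x : EuclideanSpace ℝ (Fin n),
            (∏ i ∈ (s.erase a).erase j, ⟪O i, x⟫) * Real.exp (-(R ^ 2 * ‖x‖ ^ 2)) := by
  classical
  set s' := s.erase a with hs'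
  have h0 := ibp O hR s' (O a)
  have h1 : (fun x : EuclideanSpace ℝ (Fin n) =>
      ((∑ j ∈ s', ⟪O j, O a⟫ * ∏ i ∈ s'.erase j, ⟪O i, x⟫)
        - 2 * R ^ 2 * ⟪O a, x⟫ * ∏ i ∈ s', ⟪O i, x⟫) * Real.exp (-(R ^ 2 * ‖x‖ ^ 2)))
      = fun x : EuclideanSpace ℝ (Fin n) =>
        (∑ j ∈ s', (⟪O j, O a⟫ * ∏ i ∈ s'.erase j, ⟪O i, x⟫) * Real.exp (-(R ^ 2 * ‖x‖ ^ 2)))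
        - (2 * R ^ 2) * ((⟪O a, x⟫ * ∏ i ∈ s', ⟪O i, x⟫) * Real.exp (-(R ^ 2 * ‖x‖ ^ 2))) := by
    funext x
    rw [sub_mul, Finset.sum_mul]
    ring
  rw [h1] at h0
  have hA : Integrable (fun x : EuclideanSpace ℝ (Fin n) =>
      ∑ j ∈ s', (⟪O j, O a⟫ * ∏ i ∈ s'.erase j, ⟪O i, x⟫) * Real.exp (-(R ^ 2 * ‖x‖ ^ 2))) :=
    integrable_finset_sum s' fun j _ => integrable_const_mul_prod O hR _ _
  have hB : Integrable (fun x : EuclideanSpace ℝ (Fin n) =>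
      (2 * R ^ 2) * ((⟪O a, x⟫ * ∏ i ∈ s', ⟪O i, x⟫) * Real.exp (-(R ^ 2 * ‖x‖ ^ 2)))) :=
    (integrable_inner_mul_prod O hR (O a) s').const_mul _
  rw [integral_sub hA hB, sub_eq_zero, integral_finset_sum s'
    (fun j _ => integrable_const_mul_prod O hR _ _), integral_const_mul] at h0
  have h2 : ∀ j ∈ s', (∫ x : EuclideanSpace ℝ (Fin n),
      (⟪O j, O a⟫ * ∏ i ∈ s'.erase j, ⟪O i, x⟫) * Real.exp (-(R ^ 2 * ‖x‖ ^ 2)))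
      = ⟪O j, O a⟫ * ∫ x : EuclideanSpace ℝ (Fin n),
          (∏ i ∈ s'.erase j, ⟪O i, x⟫) * Real.exp (-(R ^ 2 * ‖x‖ ^ 2)) := by
    intro j _
    rw [← integral_const_mul]
    congr 1
    funext x
    ring
  rw [Finset.sum_congr rfl h2] at h0
  have h3 : (∫ x : EuclideanSpace ℝ (Fin n),
      (⟪O a, x⟫ * ∏ i ∈ s', ⟪O i, x⟫) * Real.exp (-(R ^ 2 * ‖x‖ ^ 2)))
      = ∫ x : EuclideanSpace ℝ (Fin n), (∏ i ∈ s, ⟪O i, x⟫) * Real.exp (-(R ^ 2 * ‖x‖ ^ 2)) := by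
    congr 1
    funext x
    rw [hs', Finset.mul_prod_erase s (fun i => (⟪O i, x⟫ : ℝ)) ha]
  rw [h3] at h0
  have hR2 : (2 * R ^ 2) ≠ 0 := by positivity
  calc (∫ x : EuclideanSpace ℝ (Fin n), (∏ i ∈ s, ⟪O i, x⟫) * Real.exp (-(R ^ 2 * ‖x‖ ^ 2)))
      = (1 / (2 * R ^ 2)) * ((2 * R ^ 2) *
        ∫ x : EuclideanSpace ℝ (Fin n), (∏ i ∈ s, ⟪O i, x⟫) * Real.exp (-(R ^ 2 * ‖x‖ ^ 2))) := by
        field_simp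
    _ = (1 / (2 * R ^ 2)) * ∑ j ∈ s', ⟪O j, O a⟫ *
        ∫ x : EuclideanSpace ℝ (Fin n),
          (∏ i ∈ s'.erase j, ⟪O i, x⟫) * Real.exp (-(R ^ 2 * ‖x‖ ^ 2)) := by rw [h0]
    _ = _ := by
        rw [Finset.mul_sum]
        refine Finset.sum_congr rfl fun j _ => ?_
        rw [real_inner_comm (O j) (O a)]
        ring

end Part2

end WickAux

open WickAux WickAux.Part2 in
/-- Wick's theorem for the free Gaussian theory with action `S(x) = R²‖x‖²` on
`EuclideanSpace ℝ (Fin n)`.  Linear observables are identified with vectors `O i` via the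
inner product.  The normalized Gaussian moment vanishes for an odd number of insertions,
and for any number of insertions it is the sum over perfect matchings `M` of `{1,…,k}`
(encoded as finsets of unordered pairs covering each index exactly once, with no diagonal
pairs) of the product over matched pairs `{i,j}` of `(1/(2R²))⟪O i, O j⟫`. -/
theorem stmt1 (n k : ℕ) (R : ℝ) (hR : 0 < R)
    (O : Fin k → EuclideanSpace ℝ (Fin n)) :
    (Odd k →
      (∫ x : EuclideanSpace ℝ (Fin n),
          (∏ i, ⟪O i, x⟫) * Real.exp (-(R ^ 2 * ‖x‖ ^ 2))) /
        (∫ x : EuclideanSpace ℝ (Fin n), Real.exp (-(R ^ 2 * ‖x‖ ^ 2))) = 0) ∧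
    (∫ x : EuclideanSpace ℝ (Fin n),
        (∏ i, ⟪O i, x⟫) * Real.exp (-(R ^ 2 * ‖x‖ ^ 2))) /
      (∫ x : EuclideanSpace ℝ (Fin n), Real.exp (-(R ^ 2 * ‖x‖ ^ 2))) =
      ∑ M : Finset (Sym2 (Fin k)),
        (if (∀ e ∈ M, ¬ e.IsDiag) ∧ (∀ i : Fin k, ∃! e, e ∈ M ∧ i ∈ e) then
          ∏ e ∈ M, Sym2.lift
            ⟨fun i j => (1 / (2 * R ^ 2)) * ⟪O i, O j⟫,
             fun i j => by simp [real_inner_comm, mul_comm]⟩ e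
        else 0) := by
  classical
  set Z := ∫ x : EuclideanSpace ℝ (Fin n), Real.exp (-(R ^ 2 * ‖x‖ ^ 2)) with hZdef
  have hZpos : 0 < Z := by
    rw [hZdef]
    have h : (∫ x : EuclideanSpace ℝ (Fin n), Real.exp (-(R ^ 2 * ‖x‖ ^ 2)))
        = ∫ x : EuclideanSpace ℝ (Fin n), Real.exp (-(R ^ 2) * ‖x‖ ^ 2) := by
      simp_rw [neg_mul]
    rw [h, GaussianFourier.integral_rexp_neg_mul_sq_norm (by positivity : (0:ℝ) < R ^ 2)]
    exact Real.rpow_pos_of_pos (div_pos Real.pi_pos (by positivity)) _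
  set w : Sym2 (Fin k) → ℝ := Sym2.lift
    ⟨fun i j => (1 / (2 * R ^ 2)) * ⟪O i, O j⟫,
     fun i j => by simp [real_inner_comm, mul_comm]⟩ with hw
  have main : ∀ s : Finset (Fin k),
      (∫ x : EuclideanSpace ℝ (Fin n), (∏ i ∈ s, ⟪O i, x⟫) * Real.exp (-(R ^ 2 * ‖x‖ ^ 2)))
        = Z * WickAux.Wsum w s := by
    intro s
    induction s using Finset.strongInductionOn with
    | _ s ih =>
      rcases Finset.eq_empty_or_nonempty s with rfl | ⟨a, ha⟩
      · simp [WickAux.Wsum_empty, hZdef]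
      · rw [J_rec O hR ha, WickAux.Wsum_rec w ha, Finset.mul_sum]
        refine Finset.sum_congr rfl fun j hj => ?_
        rw [ih _ (Finset.ssubset_of_subset_of_ssubset
          (Finset.erase_subset j (s.erase a)) (Finset.erase_ssubset ha))]
        rw [hw, Sym2.lift_mk]
        ring
  have hnum0 : Odd k → (∫ x : EuclideanSpace ℝ (Fin n),
      (∏ i, ⟪O i, x⟫) * Real.exp (-(R ^ 2 * ‖x‖ ^ 2))) = 0 := by
    intro hk
    set f : EuclideanSpace ℝ (Fin n) → ℝ :=
      fun x => (∏ i, ⟪O i, x⟫) * Real.exp (-(R ^ 2 * ‖x‖ ^ 2)) with hf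
    have h2 : ∀ x, f (-x) = - f x := by
      intro x
      have hprod : (∏ i, (⟪O i, -x⟫ : ℝ)) = (-1 : ℝ) ^ k * ∏ i, ⟪O i, x⟫ := by
        have : ∀ i : Fin k, (⟪O i, -x⟫ : ℝ) = (-1) * ⟪O i, x⟫ := fun i => by
          rw [inner_neg_right]; ring
        rw [Finset.prod_congr rfl fun i _ => this i, Finset.prod_mul_distrib,
          Finset.prod_const, Finset.card_univ, Fintype.card_fin]
      rw [hf]
      simp only [norm_neg]
      rw [hprod, Odd.neg_one_pow hk]
      ring
    have h1 : (∫ x, f (-x)) = ∫ x, f x := MeasureTheory.integral_neg_eq_self f volume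
    have h3 : (∫ x, f (-x)) = - ∫ x, f x := by
      simp_rw [h2]
      exact integral_neg f
    have : (∫ x, f x) = 0 := by linarith
    exact this
  constructor
  · intro hk
    rw [hnum0 hk, zero_div]
  · rw [main Finset.univ, mul_div_cancel_left₀ _ hZpos.ne']
    rw [WickAux.Wsum]
    refine Finset.sum_congr rfl fun M _ => ?_
    refine if_congr ?_ rfl rfl
    constructor
    · rintro ⟨h1, h2, -⟩
      exact ⟨h1, fun i => h2 i (Finset.mem_univ i)⟩
    · rintro ⟨h1, h2⟩
      exact ⟨h1, fun i _ => h2 i, fun e he i hie => Finset.mem_univ i⟩
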